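/- arXiv:1708.01028 — 4 statements merged into one kernel-verified Lean document; each statement's English description precedes it below -/
import Mathlib

section
/- Let $\mathcal{A}$ be a unital C*-algebra in which every hermitian element has finite spectrum. Then $\mathcal{A}$ is finite dimensional. -/
namespace CStarFinSpec

variable {A : Type*} [CStarAlgebra A]

/-- A minimal nonzero projection. -/
def MinProj (p : A) : Prop :=
  IsSelfAdjoint p ∧ p * p = p ∧ p ≠ 0 ∧
    ∀ q : A, IsSelfAdjoint q → q * q = q → q * p = q → p * q = q → q = 0 ∨ q = p

theorem real_spec_finite (a : A) (ha : (spectrum ℂ a).Finite) : (spectrum ℝ a).Finite := by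
  have h1 : spectrum ℝ a ⊆ (fun r : ℝ => (r : ℂ)) ⁻¹' spectrum ℂ a := by
    intro r hr
    simp only [Set.mem_preimage, spectrum.mem_iff] at hr ⊢
    rwa [show algebraMap ℂ A (r : ℂ) = algebraMap ℝ A r by
      rw [IsScalarTower.algebraMap_apply ℝ ℂ A]; norm_cast]
  exact (ha.preimage (fun x _ y _ h => by exact_mod_cast h)).subset h1

theorem no_inf_orth (p : ℕ → A) (hsa : ∀ n, IsSelfAdjoint (p n)) (hidem : ∀ n, p n * p n = p n)
    (hne : ∀ n, p n ≠ 0) (horth : ∀ m n, m ≠ n → p m * p n = 0)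
    (h : ∀ a : A, IsSelfAdjoint a → (spectrum ℂ a).Finite) : False := by
  have hnorm : ∀ n, ‖p n‖ = 1 := by
    intro n
    have h1 : ‖p n‖ * ‖p n‖ = ‖p n‖ := by
      rw [← CStarRing.norm_star_mul_self (x := p n), (hsa n).star_eq, hidem n]
    have h0 : ‖p n‖ ≠ 0 := fun hc => hne n (norm_eq_zero.mp hc)
    field_simp at h1
    tauto
  have hsum : Summable (fun n : ℕ => (2 : ℝ)⁻¹ ^ n • p n) := by
    apply Summable.of_norm
    simp only [norm_smul, hnorm, mul_one]
    simpa using summable_geometric_of_lt_one (by norm_num) (by norm_num : (2:ℝ)⁻¹ < 1)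
  set x : A := ∑' n, (2 : ℝ)⁻¹ ^ n • p n with hx
  have hxsa : IsSelfAdjoint x := by
    rw [IsSelfAdjoint, hx, tsum_star]
    congr 1
    ext n
    rw [star_smul, (hsa n).star_eq, star_trivial]
  have heig : ∀ m, x * p m = ((2 : ℝ)⁻¹ ^ m : ℝ) • p m := by
    intro m
    rw [hx, ← (hsum.hasSum.mul_right (p m)).tsum_eq]
    rw [tsum_eq_single m]
    · simp [smul_mul_assoc, hidem m]
    · intro n hn
      simp [smul_mul_assoc, horth n m hn]
  have hmem : ∀ m, ((2 : ℂ)⁻¹ ^ m) ∈ spectrum ℂ x := by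
    intro m
    rw [spectrum.mem_iff]
    intro hu
    apply hne m
    have hsmul : ((2 : ℂ)⁻¹ ^ m) • p m = ((2 : ℝ)⁻¹ ^ m : ℝ) • p m := by
      rw [show ((2:ℂ)⁻¹ ^ m) = (((2:ℝ)⁻¹ ^ m : ℝ) : ℂ) by push_cast; ring]
      rw [Complex.coe_smul]
    have h2 : (algebraMap ℂ A ((2 : ℂ)⁻¹ ^ m) - x) * p m = 0 := by
      rw [sub_mul, heig m, Algebra.algebraMap_eq_smul_one, smul_mul_assoc, one_mul,
        hsmul, sub_self]
    calc p m = (↑hu.unit⁻¹ * (algebraMap ℂ A ((2 : ℂ)⁻¹ ^ m) - x)) * p m := by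
              simp [IsUnit.val_inv_mul]
      _ = ↑hu.unit⁻¹ * ((algebraMap ℂ A ((2 : ℂ)⁻¹ ^ m) - x) * p m) := by rw [mul_assoc]
      _ = 0 := by rw [h2, mul_zero]
  have hinf : (spectrum ℂ x).Infinite := by
    refine Set.infinite_of_injective_forall_mem (f := fun m : ℕ => ((2 : ℂ)⁻¹ ^ m)) ?_ hmem
    intro m n hmn
    simp only at hmn
    have h2 : ((2:ℝ)⁻¹ : ℝ) ^ m = ((2:ℝ)⁻¹ : ℝ) ^ n := by
      have h3 : (((2:ℝ)⁻¹ ^ m : ℝ) : ℂ) = (((2:ℝ)⁻¹ ^ n : ℝ) : ℂ) := by push_cast; exact hmn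
      exact_mod_cast h3
    exact (pow_right_strictAnti₀ (by norm_num) (by norm_num : (2:ℝ)⁻¹ < 1)).injective h2
  exact hinf (h x hxsa)

/-- corner of a minimal projection is scalar, selfadjoint case -/
theorem corner_scalar_sa [Nontrivial A]
    (h : ∀ a : A, IsSelfAdjoint a → (spectrum ℂ a).Finite)
    (p : A) (hpsa : IsSelfAdjoint p) (hpi : p * p = p)
    (hmin : ∀ q : A, IsSelfAdjoint q → q * q = q → q * p = q → p * q = q → q = 0 ∨ q = p)
    (x : A) (hxsa : IsSelfAdjoint x) : ∃ c : ℝ, p * x * p = c • p := by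
  set b := p * x * p with hbdef
  have hbsa : IsSelfAdjoint b := by
    rw [IsSelfAdjoint, hbdef]
    simp only [star_mul, hpsa.star_eq, hxsa.star_eq]
    exact (mul_assoc p x p).symm
  have hbp : b * p = b := by rw [hbdef, mul_assoc (p * x) p p, hpi]
  have hpb : p * b = b := by rw [hbdef, ← mul_assoc, ← mul_assoc, hpi]
  have hσfin : (spectrum ℝ b).Finite := real_spec_finite b (h b hbsa)
  by_cases hz : ∀ lam ∈ spectrum ℝ b, lam = 0
  · refine ⟨0, ?_⟩
    have hb0 : b = 0 := by
      have h1 : cfc (id : ℝ → ℝ) b = cfc (fun _ => (0:ℝ)) b :=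
        cfc_congr fun t ht => hz t ht
      rwa [cfc_id ℝ b, cfc_const 0 b hbsa, map_zero] at h1
    show b = (0:ℝ) • p
    rw [hb0, zero_smul]
  · push_neg at hz
    obtain ⟨lam, hlam, hlam0⟩ := hz
    set f : ℝ → ℝ := Set.indicator {lam} (fun _ => (1:ℝ)) with hfdef
    have hcont : ∀ g : ℝ → ℝ, ContinuousOn g (spectrum ℝ b) := fun g => hσfin.continuousOn g
    set e := cfc f b with hedef
    have hesa : IsSelfAdjoint e := cfc_predicate f b
    have hff : ∀ t : ℝ, f t * f t = f t := by
      intro t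
      by_cases ht : t = lam <;> simp [hfdef, Set.indicator, ht]
    have heidem : e * e = e := by
      rw [hedef, ← cfc_mul f f b (hcont f) (hcont f)]
      exact cfc_congr fun t _ => hff t
    have hene : e ≠ 0 := by
      intro he0
      have h1 : (1 : ℝ) ∈ spectrum ℝ e := by
        rw [hedef, cfc_map_spectrum (ha := hbsa) (hf := hcont f)]
        exact ⟨lam, hlam, by simp [hfdef]⟩
      rw [he0, spectrum.zero_eq] at h1
      simp at h1
    have hpoly : ∃ R : Polynomial ℝ, e = b * (Polynomial.aeval b R) ∧
        e = (Polynomial.aeval b R) * b := by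
      classical
      set s : Finset ℝ := insert 0 hσfin.toFinset with hsdef
      have hinj : Set.InjOn id (s : Set ℝ) := Function.injective_id.injOn
      set Q : Polynomial ℝ := Lagrange.interpolate s id f with hQdef
      have hQeval : ∀ t ∈ s, Q.eval t = f t := by
        intro t ht
        have := Lagrange.eval_interpolate_at_node f hinj ht
        exact this
      have hQ0 : Q.eval 0 = 0 := by
        rw [hQeval 0 (Finset.mem_insert_self 0 _)]
        simp [hfdef, Set.indicator, Ne.symm hlam0]
      have hXdvd : Polynomial.X ∣ Q := by
        rw [Polynomial.X_dvd_iff, Polynomial.coeff_zero_eq_eval_zero, hQ0]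
      obtain ⟨R, hR⟩ := hXdvd
      have heQ : e = Polynomial.aeval b Q := by
        rw [hedef, ← cfc_polynomial Q b]
        apply cfc_congr
        intro t ht
        exact (hQeval t (Finset.mem_insert_of_mem (hσfin.mem_toFinset.mpr ht))).symm
      refine ⟨R, ?_, ?_⟩
      · rw [heQ, hR, map_mul, Polynomial.aeval_X]
      · rw [heQ, hR, mul_comm Polynomial.X R, map_mul, Polynomial.aeval_X]
    obtain ⟨R, hR1, hR2⟩ := hpoly
    have hpe : p * e = e := by rw [hR1, ← mul_assoc, hpb]
    have hep : e * p = e := by rw [hR2, mul_assoc, hbp]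
    have hep2 : e = p := by
      rcases hmin e hesa heidem hep hpe with h0 | h0
      · exact absurd h0 hene
      · exact h0
    have hbe : b * e = lam • e := by
      have h1 : b * e = cfc (fun t => id t * f t) b := by
        conv_lhs => rw [← cfc_id ℝ b, hedef]
        rw [← cfc_mul _ f b (hcont _) (hcont f)]
      have h2 : cfc (fun t => id t * f t) b = cfc (fun t => lam • f t) b := by
        apply cfc_congr
        intro t _
        by_cases ht : t = lam <;> simp [hfdef, Set.indicator, ht]
      rw [h1, h2, cfc_smul lam f b (hcont f), hedef]
    refine ⟨lam, ?_⟩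
    show b = lam • p
    rw [← hbp, ← hep2, hbe, hep2]

theorem corner_scalar [Nontrivial A]
    (h : ∀ a : A, IsSelfAdjoint a → (spectrum ℂ a).Finite)
    (p : A) (hp : MinProj p) (x : A) : ∃ c : ℂ, p * x * p = c • p := by
  obtain ⟨hpsa, hpi, -, hmin⟩ := hp
  have hcs := corner_scalar_sa h p hpsa hpi hmin
  obtain ⟨c₁, hc₁⟩ := hcs (↑(realPart x)) (realPart x).2
  obtain ⟨c₂, hc₂⟩ := hcs (↑(imaginaryPart x)) (imaginaryPart x).2
  refine ⟨(c₁ : ℂ) + Complex.I * c₂, ?_⟩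
  have hx : (↑(realPart x) : A) + Complex.I • (↑(imaginaryPart x) : A) = x :=
    realPart_add_I_smul_imaginaryPart x
  rw [← hx]
  rw [mul_add, add_mul, hc₁]
  rw [mul_smul_comm, smul_mul_assoc, hc₂]
  rw [add_smul, mul_smul]
  norm_num

/-- Every nonzero projection dominates a minimal projection. -/
theorem exists_min_below
    (h : ∀ a : A, IsSelfAdjoint a → (spectrum ℂ a).Finite)
    (p : A) (hpsa : IsSelfAdjoint p) (hpi : p * p = p) (hpne : p ≠ 0) :
    ∃ e : A, MinProj e ∧ e * p = e ∧ p * e = e := by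
  classical
  by_contra hcon
  -- "bad" projections: nonzero, no minimal subprojection
  set Bad : A → Prop := fun r => IsSelfAdjoint r ∧ r * r = r ∧ r ≠ 0 ∧
    ¬∃ e : A, MinProj e ∧ e * r = e ∧ r * e = e with hBad
  have hpbad : Bad p := ⟨hpsa, hpi, hpne, fun he => hcon he⟩
  have hstep : ∀ r : A, Bad r → ∃ s : A, Bad s ∧ s * r = s ∧ r * s = s ∧ s ≠ r := by
    intro r ⟨hrsa, hri, hrne, hrnomin⟩
    have hrnotmin : ¬MinProj r := fun hm => hrnomin ⟨r, hm, hri, hri⟩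
    simp only [MinProj, not_and] at hrnotmin
    have := hrnotmin hrsa hri hrne
    push_neg at this
    obtain ⟨s, hssa, hsi, hsr, hrs, hsne0, hsner⟩ := this
    refine ⟨s, ⟨hssa, hsi, hsne0, ?_⟩, hsr, hrs, hsner⟩
    rintro ⟨e, he, hes, hse⟩
    exact hrnomin ⟨e, he, by rw [← hes, mul_assoc, hsr], by rw [← hse, ← mul_assoc, hrs]⟩
  -- build a strictly decreasing sequence of bad projections
  have hseq : ∃ P : ℕ → A, P 0 = p ∧ ∀ n, Bad (P n) ∧
      P (n+1) * P n = P (n+1) ∧ P n * P (n+1) = P (n+1) ∧ P (n+1) ≠ P n := by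
    choose F hF1 hF2 hF3 hF4 using hstep
    refine ⟨fun n => Nat.rec p (fun _ r => if hr : Bad r then F r hr else r) n, rfl, ?_⟩
    have hbad : ∀ n, Bad (Nat.rec p (fun _ r => if hr : Bad r then F r hr else r) n : A) := by
      intro n
      induction n with
      | zero => exact hpbad
      | succ k ih =>
        show Bad (if hr : Bad _ then F _ hr else _)
        rw [dif_pos ih]
        exact hF1 _ ih
    intro n
    have hs : (Nat.rec p (fun _ r => if hr : Bad r then F r hr else r) (n+1) : A)
        = F _ (hbad n) := by
      show (if hr : Bad _ then F _ hr else _) = _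
      rw [dif_pos (hbad n)]
    refine ⟨hbad n, ?_, ?_, ?_⟩
    · beta_reduce; rw [hs]; exact hF2 _ (hbad n)
    · beta_reduce; rw [hs]; exact hF3 _ (hbad n)
    · beta_reduce; rw [hs]; exact hF4 _ (hbad n)
  obtain ⟨P, hP0, hP⟩ := hseq
  have hPsa : ∀ n, IsSelfAdjoint (P n) := fun n => (hP n).1.1
  have hPi : ∀ n, P n * P n = P n := fun n => (hP n).1.2.1
  have hle1 : ∀ n, P (n+1) * P n = P (n+1) := fun n => (hP n).2.1
  have hle2 : ∀ n, P n * P (n+1) = P (n+1) := fun n => (hP n).2.2.1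
  have hne' : ∀ n, P (n+1) ≠ P n := fun n => (hP n).2.2.2
  -- chain: m ≤ n → P n ≤ P m
  have hchain : ∀ m n, m ≤ n → P n * P m = P n ∧ P m * P n = P n := by
    intro m n hmn
    induction n with
    | zero =>
      have : m = 0 := Nat.le_zero.mp hmn
      subst this
      exact ⟨hPi 0, hPi 0⟩
    | succ k ih =>
      rcases Nat.lt_or_ge m (k+1) with hk | hk
      · have hmk : m ≤ k := Nat.lt_succ_iff.mp hk
        obtain ⟨i1, i2⟩ := ih hmk
        constructor
        · rw [← hle1 k, mul_assoc, i1]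
        · rw [← hle2 k, ← mul_assoc, i2]
      · have : m = k + 1 := le_antisymm hmn hk
        subst this
        exact ⟨hPi _, hPi _⟩
  set d : ℕ → A := fun n => P n - P (n+1) with hd
  have hdsa : ∀ n, IsSelfAdjoint (d n) := fun n => (hPsa n).sub (hPsa (n+1))
  have hdi : ∀ n, d n * d n = d n := by
    intro n
    simp only [hd, sub_mul, mul_sub, hPi n, hPi (n+1), hle1 n, hle2 n]
    abel
  have hdne : ∀ n, d n ≠ 0 := fun n => sub_ne_zero_of_ne (Ne.symm (hne' n))
  have hkey : ∀ m n, m < n → d m * d n = 0 ∧ d n * d m = 0 := by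
    intro m n hmn
    have hn1 : m + 1 ≤ n := hmn
    have hn2 : m + 1 ≤ n + 1 := Nat.le_succ_of_le hn1
    have hA := hchain (m+1) n hn1
    have hB := hchain (m+1) (n+1) hn2
    have h1 : d m * P (m+1) = 0 := by
      simp only [hd, sub_mul, hle2 m, hPi (m+1), sub_self]
    have h2 : P (m+1) * d m = 0 := by
      simp only [hd, mul_sub, hle1 m, hPi (m+1), sub_self]
    have h3 : P (m+1) * d n = d n := by
      simp only [hd, mul_sub, hB.2, hA.2]
    have h4 : d n * P (m+1) = d n := by
      simp only [hd, sub_mul, hB.1, hA.1]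
    constructor
    · rw [← h3, ← mul_assoc, h1, zero_mul]
    · rw [← h4, mul_assoc, h2, mul_zero]
  have horth : ∀ m n, m ≠ n → d m * d n = 0 := by
    intro m n hmn
    rcases lt_or_gt_of_ne hmn with hlt | hgt
    · exact (hkey m n hlt).1
    · exact (hkey n m hgt).2
  exact no_inf_orth d hdsa hdi hdne horth h

/-- sum lemma: finite pairwise orthogonal family of projections -/
theorem sum_proj (F : Finset A) (hsa : ∀ p ∈ F, IsSelfAdjoint p)
    (hidem : ∀ p ∈ F, p * p = p) (horth : ∀ p ∈ F, ∀ q ∈ F, p ≠ q → p * q = 0) :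
    IsSelfAdjoint (∑ p ∈ F, p) ∧ (∑ p ∈ F, p) * (∑ p ∈ F, p) = ∑ p ∈ F, p ∧
      (∀ p ∈ F, p * (∑ p ∈ F, p) = p ∧ (∑ p ∈ F, p) * p = p) := by
  refine ⟨?_, ?_, ?_⟩
  · rw [IsSelfAdjoint, star_sum]
    exact Finset.sum_congr rfl fun p hp => (hsa p hp).star_eq
  · rw [Finset.sum_mul_sum]
    apply Finset.sum_congr rfl
    intro p hp
    rw [Finset.sum_eq_single p (fun q hq hqp => horth p hp q hq (Ne.symm hqp))
      (fun hp' => absurd hp hp')]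
    exact hidem p hp
  · intro p hp
    constructor
    · rw [Finset.mul_sum]
      rw [Finset.sum_eq_single p (fun q hq hqp => horth p hp q hq (Ne.symm hqp))
        (fun hp' => absurd hp hp')]
      exact hidem p hp
    · rw [Finset.sum_mul]
      rw [Finset.sum_eq_single p (fun q hq hqp => horth q hq p hp hqp)
        (fun hp' => absurd hp hp')]
      exact hidem p hp

/-- There is a finite family of pairwise orthogonal minimal projections summing to 1. -/
theorem exists_partition
    (h : ∀ a : A, IsSelfAdjoint a → (spectrum ℂ a).Finite) :
    ∃ M : Finset A, (∀ p ∈ M, MinProj p) ∧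
      (∀ p ∈ M, ∀ q ∈ M, p ≠ q → p * q = 0) ∧ ∑ p ∈ M, p = 1 := by
  classical
  set 𝒮 : Set (Set A) := {S | (∀ p ∈ S, MinProj p) ∧
    ∀ p ∈ S, ∀ q ∈ S, p ≠ q → p * q = 0} with h𝒮
  obtain ⟨M0, hM0⟩ : ∃ m, Maximal (· ∈ 𝒮) m := by
    apply zorn_subset
    intro c hc hchain
    refine ⟨⋃₀ c, ⟨?_, ?_⟩, fun s hs => Set.subset_sUnion_of_mem hs⟩
    · rintro p ⟨S, hS, hpS⟩
      exact (hc hS).1 p hpS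
    · rintro p ⟨S, hS, hpS⟩ q ⟨T, hT, hqT⟩ hpq
      rcases hchain.total hS hT with hST | hTS
      · exact (hc hT).2 p (hST hpS) q hqT hpq
      · exact (hc hS).2 p hpS q (hTS hqT) hpq
  have hM0min : ∀ p ∈ M0, MinProj p := hM0.prop.1
  have hM0orth : ∀ p ∈ M0, ∀ q ∈ M0, p ≠ q → p * q = 0 := hM0.prop.2
  have hM0fin : M0.Finite := by
    by_contra hinf
    set f := Set.Infinite.natEmbedding M0 hinf with hf
    apply no_inf_orth (fun n => (f n : A))
    · exact fun n => (hM0min _ (f n).2).1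
    · exact fun n => (hM0min _ (f n).2).2.1
    · exact fun n => (hM0min _ (f n).2).2.2.1
    · intro m n hmn
      exact hM0orth _ (f m).2 _ (f n).2 (fun he => hmn (f.injective (Subtype.ext he)))
    · exact h
  refine ⟨hM0fin.toFinset, fun p hp => hM0min p (hM0fin.mem_toFinset.mp hp),
    fun p hp q hq hpq => hM0orth p (hM0fin.mem_toFinset.mp hp) q (hM0fin.mem_toFinset.mp hq) hpq,
    ?_⟩
  set F := hM0fin.toFinset with hF
  obtain ⟨hqsa, hqidem, hqabs⟩ := sum_proj F
    (fun p hp => (hM0min p (hM0fin.mem_toFinset.mp hp)).1)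
    (fun p hp => (hM0min p (hM0fin.mem_toFinset.mp hp)).2.1)
    (fun p hp q hq hpq =>
      hM0orth p (hM0fin.mem_toFinset.mp hp) q (hM0fin.mem_toFinset.mp hq) hpq)
  set qq : A := ∑ p ∈ F, p with hqq
  by_contra hq1
  have hrne : (1 : A) - qq ≠ 0 := fun hr => hq1 (by rwa [sub_eq_zero, eq_comm] at hr)
  have hrsa : IsSelfAdjoint ((1:A) - qq) := ((by rw [IsSelfAdjoint, star_one] : IsSelfAdjoint (1:A))).sub hqsa
  have hridem : ((1:A) - qq) * ((1:A) - qq) = (1:A) - qq := by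
    have h1 : ((1:A) - qq) * ((1:A) - qq) = 1 - qq - qq + qq * qq := by noncomm_ring
    rw [h1, hqidem]
    abel
  obtain ⟨e, heminp, her, hre⟩ := exists_min_below h _ hrsa hridem hrne
  have heq0 : e * qq = 0 := by
    have h2 := her
    rw [mul_sub, mul_one] at h2
    exact sub_eq_self.mp h2
  have hqe0 : qq * e = 0 := by
    have h2 := hre
    rw [sub_mul, one_mul] at h2
    exact sub_eq_self.mp h2
  have heM0 : e ∉ M0 := by
    intro heM
    have h1 : e * qq = e := (hqabs e (hM0fin.mem_toFinset.mpr heM)).1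
    exact heminp.2.2.1 (by rw [← h1, heq0])
  have horthE : ∀ p ∈ M0, p * e = 0 ∧ e * p = 0 := by
    intro p hp
    have hpq : p * qq = p := (hqabs p (hM0fin.mem_toFinset.mpr hp)).1
    have hqp : qq * p = p := (hqabs p (hM0fin.mem_toFinset.mpr hp)).2
    constructor
    · rw [← hpq, mul_assoc, hqe0, mul_zero]
    · rw [← hqp, ← mul_assoc, heq0, zero_mul]
  have hbig : insert e M0 ∈ 𝒮 := by
    constructor
    · rintro p (rfl | hp)
      · exact heminp
      · exact hM0min p hp
    · rintro p (rfl | hp) q (rfl | hq) hpq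
      · exact absurd rfl hpq
      · exact (horthE q hq).2
      · exact (horthE p hp).1
      · exact hM0orth p hp q hq hpq
  have := hM0.eq_of_subset hbig (Set.subset_insert e M0)
  exact heM0 (this ▸ Set.mem_insert e M0)

/-- one-dimensionality of corners between minimal projections -/
theorem pair_gen [Nontrivial A]
    (h : ∀ a : A, IsSelfAdjoint a → (spectrum ℂ a).Finite)
    (p q : A) (hp : MinProj p) (hq : MinProj q) :
    ∃ g : A, ∀ x : A, ∃ c : ℂ, p * x * q = c • g := by
  by_cases hz : ∀ x : A, p * x * q = 0
  · exact ⟨0, fun x => ⟨0, by rw [hz x, zero_smul]⟩⟩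
  · push_neg at hz
    obtain ⟨x₀, hx₀⟩ := hz
    set g : A := p * x₀ * q with hg
    have hpsa := hp.1
    have hqsa := hq.1
    have hpp := hp.2.1
    have hqq := hq.2.1
    have hstarg : star g = q * star x₀ * p := by
      rw [hg, star_mul, star_mul, hpsa.star_eq, hqsa.star_eq, mul_assoc]
    obtain ⟨μ, hμ⟩ := corner_scalar h q hq (star x₀ * (p * x₀))
    have hgg : star g * g = μ • q := by
      rw [hstarg, hg, ← hμ]
      have hpy : ∀ y : A, p * (p * y) = p * y := fun y => by rw [← mul_assoc, hpp]
      simp only [mul_assoc, hpy]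
    have hμ0 : μ ≠ 0 := by
      intro hc
      rw [hc, zero_smul] at hgg
      exact hx₀ ((CStarRing.star_mul_self_eq_zero_iff g).mp hgg)
    refine ⟨g, fun x => ?_⟩
    obtain ⟨c, hc⟩ := corner_scalar h p hp (x * (q * star x₀))
    have h1 : (p * x * q) * star g = c • p := by
      rw [hstarg, ← hc]
      have hqy : ∀ y : A, q * (q * y) = q * y := fun y => by rw [← mul_assoc, hqq]
      simp only [mul_assoc, hqy]
    have h2 : (p * x * q) * (star g * g) = μ • (p * x * q) := by
      rw [hgg, mul_smul_comm, mul_assoc (p * x) q q, hqq]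
    have h3 : μ • (p * x * q) = c • g := by
      rw [← h2, ← mul_assoc, h1, smul_mul_assoc]
      congr 1
      rw [hg, ← mul_assoc, ← mul_assoc, hpp]
    refine ⟨μ⁻¹ * c, ?_⟩
    rw [mul_smul, ← h3, smul_smul, inv_mul_cancel₀ hμ0, one_smul]

end CStarFinSpec

/-- **Lemma (finite spectrum implies finite dimensional).**
Let `A` be a unital C*-algebra in which every hermitian element has finite
spectrum.  Then `A` is finite dimensional (as a complex vector space). -/
theorem unital_cstar_finite_spectrum_selfAdjoint_implies_finiteDimensional
    (A : Type*) [CStarAlgebra A]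
    (h : ∀ a : A, IsSelfAdjoint a → (spectrum ℂ a).Finite) :
    FiniteDimensional ℂ A := by
  classical
  rcases subsingleton_or_nontrivial A with hs | hnt
  · exact ⟨⟨∅, by simpa using (Subsingleton.elim (⊥ : Submodule ℂ A) ⊤)⟩⟩
  open CStarFinSpec in
  obtain ⟨M, hMmin, hMorth, hMsum⟩ := exists_partition h
  choose g hgen using fun (pq : A × A) (hpq : MinProj pq.1 ∧ MinProj pq.2) =>
    pair_gen h pq.1 pq.2 hpq.1 hpq.2
  set g' : A × A → A := fun pq => if hpq : MinProj pq.1 ∧ MinProj pq.2 then g pq hpq else 0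
    with hg'
  set T : Finset A := (M ×ˢ M).image g' with hT
  refine ⟨⟨T, ?_⟩⟩
  rw [Submodule.eq_top_iff']
  intro x
  have hx : x = ∑ p ∈ M, ∑ q ∈ M, p * x * q := by
    calc x = (∑ p ∈ M, p) * x * (∑ q ∈ M, q) := by rw [hMsum, one_mul, mul_one]
    _ = ∑ p ∈ M, ∑ q ∈ M, p * x * q := by
        rw [Finset.sum_mul, Finset.sum_mul]
        apply Finset.sum_congr rfl
        intro p hp
        rw [Finset.mul_sum]
  rw [hx]
  apply Submodule.sum_mem
  intro p hp
  apply Submodule.sum_mem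
  intro q hq
  have hpq : MinProj p ∧ MinProj q := ⟨hMmin p hp, hMmin q hq⟩
  obtain ⟨c, hc⟩ := hgen (p, q) hpq x
  rw [hc]
  apply Submodule.smul_mem
  apply Submodule.subset_span
  have hge : g (p, q) hpq = g' (p, q) := (dif_pos hpq).symm
  rw [hge]
  exact Finset.mem_coe.mpr (Finset.mem_image.mpr ⟨(p, q), Finset.mk_mem_product hp hq, rfl⟩)
end

section
/- Let $G$ be a connected topological group acting on a nonempty set $X$, with the corresponding permutation unitary representation $\pi$ of $G$ on $\ell^2(X)$ given by $(\pi(g)\xi)(x) = \xi(g^{-1}\cdot x)$. Then every vector $\xi \in \ell^2(X)$ whose orbit map $g \mapsto \pi(g)\xi$ is continuous is fixed by $G$, i.e. $\pi(g)\xi = \xi$ for all $g \in G$. -/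
open scoped ENNReal

/-- **Lemma (continuous vectors of permutation representations are fixed).**
Let `G` be a connected topological group acting on a nonempty set `X`, and let
`π` be the corresponding permutation unitary representation of `G` on `ℓ²(X)`,
given by `(π g ξ) x = ξ (g⁻¹ • x)`.  Then every vector `ξ ∈ ℓ²(X)` whose orbit
map `g ↦ π g ξ` is continuous (for the norm topology) is fixed by `G`. -/
theorem continuous_vector_of_permutation_rep_is_fixed
    {G X : Type*} [Group G] [TopologicalSpace G] [IsTopologicalGroup G]
    [ConnectedSpace G] [MulAction G X] [Nonempty X]
    (π : G → (lp (fun _ : X => ℂ) 2 ≃ₗᵢ[ℂ] lp (fun _ : X => ℂ) 2))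
    (hπ : ∀ (g : G) (ξ : lp (fun _ : X => ℂ) 2) (x : X),
      (π g ξ : ∀ _ : X, ℂ) x = (ξ : ∀ _ : X, ℂ) (g⁻¹ • x))
    (ξ : lp (fun _ : X => ℂ) 2)
    (hcont : Continuous fun g : G => π g ξ) :
    ∀ g : G, π g ξ = ξ := by
  classical
  -- the support of ξ is countable, hence its set of values is countable
  have hsum : Summable fun y : X => ‖(ξ : ∀ _ : X, ℂ) y‖ ^ ((2 : ℝ≥0∞).toReal) :=
    (lp.memℓp ξ).summable (by norm_num)
  have hsupp : (Function.support fun y : X => (ξ : ∀ _ : X, ℂ) y).Countable := by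
    refine hsum.countable_support.mono ?_
    intro y hy
    simp only [Function.mem_support] at hy ⊢
    intro h
    exact hy (norm_eq_zero.mp ((Real.rpow_eq_zero (norm_nonneg _) (by norm_num)).mp h))
  have hrange : (Set.range fun y : X => (ξ : ∀ _ : X, ℂ) y).Countable := by
    have : (Set.range fun y : X => (ξ : ∀ _ : X, ℂ) y) ⊆
        ((fun y : X => (ξ : ∀ _ : X, ℂ) y) ''
          (Function.support fun y : X => (ξ : ∀ _ : X, ℂ) y)) ∪ {0} := by
      rintro z ⟨y, rfl⟩
      by_cases h : (ξ : ∀ _ : X, ℂ) y = 0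
      · exact Or.inr (by simp [h])
      · exact Or.inl ⟨y, h, rfl⟩
    exact Set.Countable.mono this ((hsupp.image _).union (Set.countable_singleton 0))
  intro g
  -- evaluation at a point is Lipschitz on ℓ²
  have hev : ∀ x : X, Continuous fun v : lp (fun _ : X => ℂ) 2 =>
      (v : ∀ _ : X, ℂ) x := by
    intro x
    refine (LipschitzWith.of_dist_le_mul (K := 1) fun v w => ?_).continuous
    have h1 : ‖(v - w : lp (fun _ : X => ℂ) 2) x‖ ≤ ‖v - w‖ :=
      lp.norm_apply_le_norm two_ne_zero (v - w) x
    simpa [dist_eq_norm, lp.coeFn_sub] using h1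
  -- coordinatewise, the orbit map is a continuous map with countable range, hence constant
  have key : ∀ x : X, (ξ : ∀ _ : X, ℂ) (g⁻¹ • x) = (ξ : ∀ _ : X, ℂ) x := by
    intro x
    set c : ℂ := (ξ : ∀ _ : X, ℂ) x with hc
    set f : G → ℝ := fun h => ‖(π h ξ : ∀ _ : X, ℂ) x - c‖ with hf
    have hfc : Continuous f := ((hev x).comp hcont).sub continuous_const |>.norm
    have hf1 : f 1 = 0 := by
      simp [hf, hπ, hc]
    -- the range of f is countable
    have hfrange : (Set.range f).Countable := by
      have hsub : Set.range f ⊆ (fun z : ℂ => ‖z - c‖) ''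
          (Set.range fun y : X => (ξ : ∀ _ : X, ℂ) y) := by
        rintro r ⟨h, rfl⟩
        exact ⟨(ξ : ∀ _ : X, ℂ) (h⁻¹ • x), ⟨h⁻¹ • x, rfl⟩, by simp only [hf, hπ]⟩
      exact Set.Countable.mono hsub (hrange.image _)
    -- the range of f is preconnected in ℝ, so if f g > 0 it contains an interval
    have hpre : IsPreconnected (Set.range f) := by
      rw [← Set.image_univ]
      exact isPreconnected_univ.image f hfc.continuousOn
    have hfg : f g = 0 := by
      by_contra hne
      have hpos : 0 < f g := lt_of_le_of_ne (norm_nonneg _) (Ne.symm hne)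
      have hIcc : Set.Icc (0 : ℝ) (f g) ⊆ Set.range f := by
        have h0 : (0 : ℝ) ∈ Set.range f := ⟨1, hf1⟩
        have hg : f g ∈ Set.range f := ⟨g, rfl⟩
        exact hpre.Icc_subset h0 hg
      have hcnt : (Set.Icc (0 : ℝ) (f g)).Countable := hfrange.mono hIcc
      have := hcnt.measure_zero MeasureTheory.volume
      rw [Real.volume_Icc] at this
      simp only [sub_zero] at this
      exact absurd this (by
        simp only [ENNReal.ofReal_eq_zero, not_le]
        exact hpos)
    have : (π g ξ : ∀ _ : X, ℂ) x - c = 0 := by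
      simpa [hf] using norm_eq_zero.mp hfg
    have h2 := sub_eq_zero.mp this
    rw [hπ] at h2
    exact h2
  ext x
  rw [hπ]
  exact key x
end

section
/- Define homeomorphisms $g_n : [0,1] \to [0,1]$ by $g_n(x) = x + h_n(x)$, where $h_n$ is the piecewise linear function vanishing at the points $k/2^n$ ($k = 0, \dots, 2^n$) and taking value $(1 - 2^{-n}) 2^{-(n+1)}$ at the midpoints $(2k+1)/2^{n+1}$. Then $\|g_n - \mathrm{id}\|_\infty \leq 2^{-n}$ and $\|g_n^{-1} - \mathrm{id}\|_\infty \leq 2^{-n}$, while $\int_0^1 \sqrt{g_n'(x)\, g_{n+1}'(x)}\, dx \to \tfrac{1}{2}$ as $n \to \infty$; consequently $\|\sqrt{g_n'} - \sqrt{g_{n+1}'}\|_{L^2} \to 1$, so the functions $\sqrt{g_n'}$ do not converge to the constant function $1$ in $L^2([0,1])$. -/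
open scoped Topology

/-- The piecewise linear "tent" function `h_n : [0,1] → ℝ` vanishing at the
points `k/2ⁿ` (`k = 0, …, 2ⁿ`) and taking the value `(1 - 2⁻ⁿ) 2⁻⁽ⁿ⁺¹⁾` at the
midpoints `(2k+1)/2ⁿ⁺¹`. -/
noncomputable def tentFun (n : ℕ) (x : ℝ) : ℝ :=
  (1 - (2 : ℝ) ^ (-(n : ℤ))) *
    ((2 : ℝ) ^ (-(n + 1 : ℤ)) -
      |x - (2 * (⌊(2 : ℝ) ^ (n : ℕ) * x⌋ : ℝ) + 1) * (2 : ℝ) ^ (-(n + 1 : ℤ))|)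

/-- The homeomorphisms `g_n(x) = x + h_n(x)` of `[0,1]`. -/
noncomputable def gFun (n : ℕ) (x : ℝ) : ℝ := x + tentFun n x

open Set Filter MeasureTheory

noncomputable def slopeFun (n j : ℕ) : ℝ :=
  if Even j then 2 - (2:ℝ) ^ (-(n:ℤ)) else (2:ℝ) ^ (-(n:ℤ))

lemma zpow2_pos (m : ℤ) : (0:ℝ) < (2:ℝ)^m := zpow_pos (by norm_num) m

lemma key_mul (n : ℕ) : (2:ℝ)^(n:ℕ) * (2:ℝ)^(-(n+1:ℤ)) = 1/2 := by
  rw [← zpow_natCast (2:ℝ) n, ← zpow_add₀ (by norm_num : (2:ℝ) ≠ 0)]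
  norm_num

lemma Pn_eq (n : ℕ) : (2:ℝ)^(-(n:ℤ)) = 2 * (2:ℝ)^(-(n+1:ℤ)) := by
  rw [show (-(n:ℤ)) = 1 + (-(n+1:ℤ)) by ring, zpow_add₀ (by norm_num : (2:ℝ) ≠ 0), zpow_one]

lemma floor_eq_of_mem (n : ℕ) (k : ℤ) {x : ℝ}
    (h1 : (k:ℝ) * (2:ℝ)^(-(n:ℤ)) ≤ x) (h2 : x < ((k:ℝ)+1) * (2:ℝ)^(-(n:ℤ))) :
    ⌊(2:ℝ)^(n:ℕ) * x⌋ = k := by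
  have hA : (0:ℝ) < (2:ℝ)^(n:ℕ) := by positivity
  have e : ∀ c : ℝ, (2:ℝ)^(n:ℕ) * (c * (2:ℝ)^(-(n:ℤ))) = c := by
    intro c
    rw [mul_left_comm, ← zpow_natCast (2:ℝ) n, ← zpow_add₀ (by norm_num : (2:ℝ) ≠ 0)]
    simp
  rw [Int.floor_eq_iff]
  constructor
  · have := mul_le_mul_of_nonneg_left h1 hA.le
    rwa [e] at this
  · have := mul_lt_mul_of_pos_left h2 hA
    rw [e] at this
    push_cast
    linarith

lemma deriv_gFun_eq (n j : ℕ) {x : ℝ}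
    (hx : x ∈ Set.Ioo ((j:ℝ) * (2:ℝ)^(-(n+1:ℤ))) (((j:ℝ)+1) * (2:ℝ)^(-(n+1:ℤ)))) :
    deriv (gFun n) x = slopeFun n j := by
  set H := (2:ℝ)^(-(n+1:ℤ)) with hH
  have hHpos : 0 < H := zpow2_pos _
  have hPn : (2:ℝ)^(-(n:ℤ)) = 2*H := Pn_eq n
  have hopen : Set.Ioo ((j:ℝ)*H) (((j:ℝ)+1)*H) ∈ 𝓝 x := isOpen_Ioo.mem_nhds hx
  rcases Nat.even_or_odd j with hev | hod
  · obtain ⟨k, hk⟩ := hev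
    have hjk : (j:ℝ) = 2*(k:ℝ) := by rw [hk]; push_cast; ring
    have hEq : ∀ y ∈ Set.Ioo ((j:ℝ)*H) (((j:ℝ)+1)*H),
        gFun n y = y + (1 - 2*H) * (y - 2*(k:ℝ)*H) := by
      intro y hy
      rw [hjk] at hy
      have hfl : ⌊(2:ℝ)^(n:ℕ) * y⌋ = (k:ℤ) := by
        apply floor_eq_of_mem
        · rw [hPn]; push_cast; nlinarith [hy.1]
        · rw [hPn]; push_cast; nlinarith [hy.2]
      show y + tentFun n y = _
      rw [tentFun, hfl, hPn, ← hH]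
      have habs : |y - (2*(k:ℝ)+1)*H| = (2*(k:ℝ)+1)*H - y := by
        rw [abs_of_nonpos (by push_cast; nlinarith [hy.2])]
        ring
      push_cast
      rw [habs]
      ring
    have hEvEq : gFun n =ᶠ[𝓝 x] fun y => y + (1-2*H)*(y - 2*(k:ℝ)*H) :=
      Filter.eventuallyEq_of_mem hopen hEq
    rw [hEvEq.deriv_eq]
    have hD : HasDerivAt (fun y : ℝ => y + (1-2*H)*(y - 2*(k:ℝ)*H)) (1 + (1-2*H)*1) x :=
      (hasDerivAt_id x).add (((hasDerivAt_id x).sub_const _).const_mul _)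
    rw [hD.deriv, slopeFun, if_pos ⟨k, hk⟩, hPn]
    ring
  · obtain ⟨k, hk⟩ := hod
    have hjk : (j:ℝ) = 2*(k:ℝ)+1 := by rw [hk]; push_cast; ring
    have hEq : ∀ y ∈ Set.Ioo ((j:ℝ)*H) (((j:ℝ)+1)*H),
        gFun n y = y + (1 - 2*H) * ((2*(k:ℝ)+2)*H - y) := by
      intro y hy
      rw [hjk] at hy
      have hfl : ⌊(2:ℝ)^(n:ℕ) * y⌋ = (k:ℤ) := by
        apply floor_eq_of_mem
        · rw [hPn]; push_cast; nlinarith [hy.1]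
        · rw [hPn]; push_cast; nlinarith [hy.2]
      show y + tentFun n y = _
      rw [tentFun, hfl, hPn, ← hH]
      have habs : |y - (2*(k:ℝ)+1)*H| = y - (2*(k:ℝ)+1)*H := by
        rw [abs_of_nonneg (by push_cast; nlinarith [hy.1])]
      push_cast
      rw [habs]
      ring
    have hEvEq : gFun n =ᶠ[𝓝 x] fun y => y + (1-2*H)*((2*(k:ℝ)+2)*H - y) :=
      Filter.eventuallyEq_of_mem hopen hEq
    rw [hEvEq.deriv_eq]
    have hD : HasDerivAt (fun y : ℝ => y + (1-2*H)*((2*(k:ℝ)+2)*H - y)) (1 + (1-2*H)*(-1)) x :=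
      (hasDerivAt_id x).add (((hasDerivAt_id x).const_sub _).const_mul _)
    rw [hD.deriv, slopeFun, if_neg (by simp [hk, Nat.even_add_one, parity_simps]), hPn]
    ring

lemma ae_ne (b : ℝ) : ∀ᵐ x : ℝ, x ≠ b := by
  rw [MeasureTheory.ae_iff]
  have h : {x : ℝ | ¬ x ≠ b} = {b} := by ext x; simp
  rw [h]
  exact Real.volume_singleton

lemma integral_eq_sum (f : ℝ → ℝ) (c : ℕ → ℝ) (N : ℕ) (H : ℝ) (hHpos : 0 < H)
    (hNH : (N:ℝ) * H = 1)
    (hf : ∀ i < N, ∀ x ∈ Set.Ioo ((i:ℝ)*H) (((i:ℝ)+1)*H), f x = c i) :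
    ∫ x in (0:ℝ)..1, f x = ∑ i ∈ Finset.range N, c i * H := by
  set a : ℕ → ℝ := fun i => (i:ℝ) * H with ha
  have hle : ∀ i : ℕ, a i ≤ a (i+1) := by
    intro i; simp only [ha]; push_cast; nlinarith
  have hae : ∀ i < N, f =ᵐ[volume.restrict (Set.uIoc (a i) (a (i+1)))] fun _ => c i := by
    intro i hi
    rw [Set.uIoc_of_le (hle i)]
    rw [Filter.EventuallyEq, MeasureTheory.ae_restrict_iff' measurableSet_Ioc]
    filter_upwards [ae_ne (a (i+1))] with x hx hmem
    apply hf i hi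
    have : x ∈ Set.Ioo (a i) (a (i+1)) := ⟨hmem.1, lt_of_le_of_ne hmem.2 hx⟩
    simpa [ha] using this
  have hint : ∀ i < N, IntervalIntegrable f volume (a i) (a (i+1)) := by
    intro i hi
    exact (intervalIntegrable_const (c := c i)).congr_ae (hae i hi).symm
  have hval : ∀ i < N, (∫ x in (a i)..(a (i+1)), f x) = c i * H := by
    intro i hi
    rw [intervalIntegral.integral_congr_ae ((MeasureTheory.ae_restrict_iff'
      measurableSet_uIoc).mp (hae i hi)), intervalIntegral.integral_const]
    simp only [ha, smul_eq_mul]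
    push_cast; ring
  have hsum := intervalIntegral.sum_integral_adjacent_intervals (f := f) (μ := volume)
    (a := a) (n := N) hint
  have h0 : a 0 = 0 := by simp [ha]
  have h1 : a N = 1 := hNH
  rw [h0, h1] at hsum
  rw [← hsum]
  exact Finset.sum_congr rfl fun i hi => hval i (Finset.mem_range.mp hi)

lemma sum_periodic4 (d : ℕ → ℝ) (hd : ∀ i, d (i+4) = d i) (M : ℕ) :
    ∑ i ∈ Finset.range (4*M), d i = M * (d 0 + d 1 + d 2 + d 3) := by
  have hshift : ∀ q r, d (4*q + r) = d r := by
    intro q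
    induction q with
    | zero => simp
    | succ q ih =>
      intro r
      rw [show 4*(q+1) + r = (4*q + r) + 4 by ring, hd, ih]
  induction M with
  | zero => simp
  | succ M ih =>
    rw [show 4*(M+1) = (4*M+1+1+1)+1 by ring, Finset.sum_range_succ, Finset.sum_range_succ,
      Finset.sum_range_succ, Finset.sum_range_succ, ih,
      show 4*M+1+1+1 = 4*M+3 by ring, show 4*M+1+1 = 4*M+2 by ring,
      hshift M 3, hshift M 2, hshift M 1, show 4*M = 4*M+0 by ring, hshift M 0]
    push_cast; ring

lemma sum_periodic2 (d : ℕ → ℝ) (hd : ∀ i, d (i+2) = d i) (M : ℕ) :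
    ∑ i ∈ Finset.range (2*M), d i = M * (d 0 + d 1) := by
  have hshift : ∀ q r, d (2*q + r) = d r := by
    intro q
    induction q with
    | zero => simp
    | succ q ih =>
      intro r
      rw [show 2*(q+1) + r = (2*q + r) + 2 by ring, hd, ih]
  induction M with
  | zero => simp
  | succ M ih =>
    rw [show 2*(M+1) = (2*M+1)+1 by ring, Finset.sum_range_succ, Finset.sum_range_succ, ih,
      hshift M 1, show 2*M = 2*M+0 by ring, hshift M 0]
    push_cast; ring

lemma zpow_double (a b : ℤ) (h : b = a + 1) : (2:ℝ)^(-a) = 2 * (2:ℝ)^(-b) := by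
  subst h
  rw [show (-a) = 1 + (-(a+1)) by ring, zpow_add₀ (by norm_num : (2:ℝ) ≠ 0), zpow_one]

lemma slope_period (m j : ℕ) : slopeFun m (j+2) = slopeFun m j := by
  simp [slopeFun, Nat.even_add]

lemma pow_mul_zpow_neg (m : ℕ) : ((2:ℝ)^m) * (2:ℝ)^(-(m:ℤ)) = 1 := by
  rw [← zpow_natCast (2:ℝ) m, ← zpow_add₀ (by norm_num : (2:ℝ) ≠ 0)]
  simp

lemma integral_single_eq (n : ℕ) (φ : ℝ → ℝ) :
    ∫ x in (0:ℝ)..1, φ (deriv (gFun n) x)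
      = (1/2) * (φ (slopeFun n 0) + φ (slopeFun n 1)) := by
  set H : ℝ := (2:ℝ)^(-(n+1:ℤ)) with hH
  have hHpos : 0 < H := zpow2_pos _
  have hNH : ((2^(n+1) : ℕ) : ℝ) * H = 1 := by
    rw [hH, Nat.cast_pow, Nat.cast_ofNat, show ((n:ℤ)+1) = ((n+1 : ℕ) : ℤ) by push_cast; ring]
    exact pow_mul_zpow_neg (n+1)
  rw [integral_eq_sum (fun x => φ (deriv (gFun n) x)) (fun i => φ (slopeFun n i))
    (2^(n+1)) H hHpos hNH (fun i _ x hx => by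
      show φ (deriv (gFun n) x) = φ (slopeFun n i)
      rw [deriv_gFun_eq n i hx])]
  rw [show 2^(n+1) = 2 * 2^n by ring,
    sum_periodic2 (fun i => φ (slopeFun n i) * H) (fun i => by
      show φ (slopeFun n (i+2)) * H = φ (slopeFun n i) * H
      rw [slope_period]) (2^n)]
  have h2n : (2:ℝ)^n * H = 1/2 := key_mul n
  push_cast
  linear_combination (φ (slopeFun n 0) + φ (slopeFun n 1)) * h2n

lemma integral_pair_eq (n : ℕ) (φ : ℝ → ℝ → ℝ) :
    ∫ x in (0:ℝ)..1, φ (deriv (gFun n) x) (deriv (gFun (n+1)) x)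
      = (1/4) * (φ (slopeFun n 0) (slopeFun (n+1) 0) + φ (slopeFun n 0) (slopeFun (n+1) 1)
          + φ (slopeFun n 1) (slopeFun (n+1) 0) + φ (slopeFun n 1) (slopeFun (n+1) 1)) := by
  set H' : ℝ := (2:ℝ)^(-((n+1:ℕ) + 1 : ℤ)) with hH'
  have hH'pos : 0 < H' := zpow2_pos _
  have hHrel : (2:ℝ)^(-(n+1:ℤ)) = 2 * H' := by
    rw [hH']; exact zpow_double _ _ (by push_cast; ring)
  have hNH : ((2^(n+2) : ℕ) : ℝ) * H' = 1 := by
    rw [hH', Nat.cast_pow, Nat.cast_ofNat,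
      show (((n+1:ℕ):ℤ)+1) = ((n+2 : ℕ) : ℤ) by push_cast; ring]
    exact pow_mul_zpow_neg (n+2)
  have hf : ∀ i : ℕ, i < 2^(n+2) → ∀ x ∈ Set.Ioo ((i:ℝ)*H') (((i:ℝ)+1)*H'),
      φ (deriv (gFun n) x) (deriv (gFun (n+1)) x) = φ (slopeFun n (i/2)) (slopeFun (n+1) i) := by
    intro i _ x hx
    rw [deriv_gFun_eq (n+1) i hx]
    have hx2 : x ∈ Set.Ioo (((i/2 : ℕ):ℝ) * (2:ℝ)^(-(n+1:ℤ))) ((((i/2 : ℕ):ℝ)+1) * (2:ℝ)^(-(n+1:ℤ))) := by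
      rcases Nat.even_or_odd i with ⟨j, hj⟩ | ⟨j, hj⟩
      · have hij : i/2 = j := by omega
        have hi : (i:ℝ) = 2*(j:ℝ) := by rw [hj]; push_cast; ring
        rw [hij, hHrel]
        obtain ⟨h1, h2⟩ := hx
        rw [hi] at h1 h2
        constructor <;> nlinarith
      · have hij : i/2 = j := by omega
        have hi : (i:ℝ) = 2*(j:ℝ)+1 := by rw [hj]; push_cast; ring
        rw [hij, hHrel]
        obtain ⟨h1, h2⟩ := hx
        rw [hi] at h1 h2
        constructor <;> nlinarith
    rw [deriv_gFun_eq n (i/2) hx2]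
  rw [integral_eq_sum _ (fun i => φ (slopeFun n (i/2)) (slopeFun (n+1) i))
    (2^(n+2)) H' hH'pos hNH hf]
  have hper : ∀ i, (fun i => φ (slopeFun n (i/2)) (slopeFun (n+1) i) * H') (i+4)
      = (fun i => φ (slopeFun n (i/2)) (slopeFun (n+1) i) * H') i := by
    intro i
    simp only
    rw [show (i+4)/2 = i/2 + 2 by omega, slope_period,
      show i+4 = (i+2)+2 by ring, slope_period, slope_period]
  rw [show 2^(n+2) = 4 * 2^n by ring,
    sum_periodic4 (fun i => φ (slopeFun n (i/2)) (slopeFun (n+1) i) * H') hper (2^n)]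
  have h2n : (2:ℝ)^n * H' = 1/4 := by
    have := key_mul n
    nlinarith [hHrel]
  have e2 : slopeFun (n+1) 2 = slopeFun (n+1) 0 := slope_period (n+1) 0
  have e3 : slopeFun (n+1) 3 = slopeFun (n+1) 1 := slope_period (n+1) 1
  rw [e2, e3]
  push_cast
  linear_combination (φ (slopeFun n 0) (slopeFun (n+1) 0) + φ (slopeFun n 0) (slopeFun (n+1) 1)
    + φ (slopeFun n 1) (slopeFun (n+1) 0) + φ (slopeFun n 1) (slopeFun (n+1) 1)) * h2n

lemma abs_tentFun_le (n : ℕ) (x : ℝ) : |tentFun n x| ≤ (2:ℝ)^(-(n:ℤ)) := by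
  set H := (2:ℝ)^(-(n+1:ℤ)) with hH
  have hHpos : 0 < H := zpow2_pos _
  have hPn : (2:ℝ)^(-(n:ℤ)) = 2*H := Pn_eq n
  set k : ℤ := ⌊(2:ℝ)^(n:ℕ)*x⌋ with hk
  have h1 : (k:ℝ) ≤ (2:ℝ)^(n:ℕ)*x := Int.floor_le _
  have h2 : (2:ℝ)^(n:ℕ)*x < (k:ℝ)+1 := Int.lt_floor_add_one _
  have hAH : (2:ℝ)^(n:ℕ) * H = 1/2 := key_mul n
  have hA1 : (1:ℝ) ≤ (2:ℝ)^(n:ℕ) := one_le_pow₀ (by norm_num)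
  have e2 : ∀ y : ℝ, (2:ℝ)^(n:ℕ)*y*H = y/2 := fun y => by linear_combination y * hAH
  have hx1 : 2*(k:ℝ)*H ≤ x := by
    have e := mul_le_mul_of_nonneg_right h1 hHpos.le
    rw [e2 x] at e
    linarith
  have hx2 : x < (2*(k:ℝ)+2)*H := by
    have e := mul_lt_mul_of_pos_right h2 hHpos
    rw [e2 x] at e
    linarith
  have h2H1 : 2*H ≤ 1 := by nlinarith
  have habs : |x - (2*(k:ℝ)+1)*H| ≤ H := abs_le.mpr ⟨by linarith, by linarith⟩
  have habs0 : 0 ≤ |x - (2*(k:ℝ)+1)*H| := abs_nonneg _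
  rw [tentFun, ← hk, hPn, ← hH]
  rw [abs_of_nonneg (by nlinarith)]
  nlinarith

lemma slope0 (n : ℕ) : slopeFun n 0 = 2 - (2:ℝ)^(-(n:ℤ)) := by simp [slopeFun]

lemma slope1 (n : ℕ) : slopeFun n 1 = (2:ℝ)^(-(n:ℤ)) := by simp [slopeFun]

lemma Psucc (n : ℕ) : (2:ℝ)^(-((n+1:ℕ):ℤ)) = (2:ℝ)^(-(n:ℤ))/2 := by
  have := zpow_double (n:ℤ) ((n+1:ℕ):ℤ) (by push_cast; ring)
  linarith

lemma pn_tendsto : Filter.Tendsto (fun n : ℕ => (2:ℝ)^(-(n:ℤ))) Filter.atTop (𝓝 0) := by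
  have h : (fun n : ℕ => (2:ℝ)^(-(n:ℤ))) = fun n : ℕ => ((1:ℝ)/2)^n := by
    funext n
    rw [zpow_neg, zpow_natCast, one_div, inv_pow]
  rw [h]
  exact tendsto_pow_atTop_nhds_zero_of_lt_one (by norm_num) (by norm_num)

/-- **Example 2.6 (discontinuity of the `u`-topology action):**
the homeomorphisms `g_n = id + h_n` of `[0,1]` satisfy
`‖g_n − id‖_∞ ≤ 2⁻ⁿ` and `‖g_n⁻¹ − id‖_∞ ≤ 2⁻ⁿ`, while
`∫₀¹ √(g_n' g_{n+1}') → 1/2`, hence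
`‖√(g_n') − √(g_{n+1}')‖_{L²} → 1`; consequently the functions `√(g_n')` do
not converge to the constant function `1` in `L²([0,1])`. -/
theorem gFun_near_id_but_sqrt_deriv_not_L2_convergent :
    -- `‖g_n − id‖_∞ ≤ 2⁻ⁿ`
    (∀ (n : ℕ), ∀ x ∈ Set.Icc (0 : ℝ) 1, |gFun n x - x| ≤ (2 : ℝ) ^ (-(n : ℤ))) ∧
    -- `‖g_n⁻¹ − id‖_∞ ≤ 2⁻ⁿ`
    (∀ (n : ℕ), ∀ x ∈ Set.Icc (0 : ℝ) 1, ∀ y ∈ Set.Icc (0 : ℝ) 1,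
      gFun n y = x → |y - x| ≤ (2 : ℝ) ^ (-(n : ℤ))) ∧
    -- `∫₀¹ √(g_n' g_{n+1}') → 1/2`
    Filter.Tendsto
      (fun n : ℕ => ∫ x in (0 : ℝ)..1, Real.sqrt (deriv (gFun n) x * deriv (gFun (n + 1)) x))
      Filter.atTop (𝓝 (1 / 2 : ℝ)) ∧
    -- `‖√(g_n') − √(g_{n+1}')‖_{L²} → 1`
    Filter.Tendsto
      (fun n : ℕ =>
        Real.sqrt (∫ x in (0 : ℝ)..1,
          (Real.sqrt (deriv (gFun n) x) - Real.sqrt (deriv (gFun (n + 1)) x)) ^ 2))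
      Filter.atTop (𝓝 (1 : ℝ)) ∧
    -- `√(g_n')` does not converge to `1` in `L²([0,1])`
    ¬ Filter.Tendsto
      (fun n : ℕ => ∫ x in (0 : ℝ)..1, (Real.sqrt (deriv (gFun n) x) - 1) ^ 2)
      Filter.atTop (𝓝 (0 : ℝ)) := by
  have hsqrt2 : Real.sqrt 2 ^ 2 = 2 := Real.sq_sqrt (by norm_num)
  have hsqrt4 : Real.sqrt 4 = 2 := by
    rw [show (4:ℝ) = 2^2 by norm_num, Real.sqrt_sq (by norm_num)]
  refine ⟨?_, ?_, ?_, ?_, ?_⟩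
  · intro n x _
    have h : gFun n x - x = tentFun n x := by rw [gFun]; ring
    rw [h]; exact abs_tentFun_le n x
  · intro n x _ y _ hxy
    subst hxy
    have h : y - gFun n y = -(tentFun n y) := by rw [gFun]; ring
    rw [h, abs_neg]; exact abs_tentFun_le n y
  · set F : ℝ → ℝ := fun p => (1/4) * (Real.sqrt ((2-p)*(2-p/2)) + Real.sqrt ((2-p)*(p/2))
        + Real.sqrt (p*(2-p/2)) + Real.sqrt (p*(p/2))) with hF
    have h3 : ∀ n : ℕ, (∫ x in (0:ℝ)..1, Real.sqrt (deriv (gFun n) x * deriv (gFun (n+1)) x))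
        = F ((2:ℝ)^(-(n:ℤ))) := by
      intro n
      have h := integral_pair_eq n (fun u v => Real.sqrt (u*v))
      rw [h, slope0 n, slope0 (n+1), slope1 n, slope1 (n+1), Psucc n]
    have hFc : Continuous F := by
      rw [hF]; fun_prop
    have hlim := (hFc.tendsto 0).comp pn_tendsto
    have hF0 : F 0 = 1/2 := by
      rw [hF]
      norm_num [hsqrt4]
    rw [hF0] at hlim
    refine hlim.congr fun n => ?_
    exact (h3 n).symm
  · set G : ℝ → ℝ := fun p => (1/4) * ((Real.sqrt (2-p) - Real.sqrt (2-p/2))^2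
        + (Real.sqrt (2-p) - Real.sqrt (p/2))^2 + (Real.sqrt p - Real.sqrt (2-p/2))^2
        + (Real.sqrt p - Real.sqrt (p/2))^2) with hG
    have h4 : ∀ n : ℕ, (∫ x in (0:ℝ)..1,
          (Real.sqrt (deriv (gFun n) x) - Real.sqrt (deriv (gFun (n+1)) x))^2)
        = G ((2:ℝ)^(-(n:ℤ))) := by
      intro n
      have h := integral_pair_eq n (fun u v => (Real.sqrt u - Real.sqrt v)^2)
      rw [h, slope0 n, slope0 (n+1), slope1 n, slope1 (n+1), Psucc n]
    have hGc : Continuous (fun p => Real.sqrt (G p)) := by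
      rw [hG]; fun_prop
    have hlim := (hGc.tendsto 0).comp pn_tendsto
    have hG0 : Real.sqrt (G 0) = 1 := by
      rw [hG]
      norm_num
    rw [hG0] at hlim
    refine hlim.congr fun n => ?_
    simp only [Function.comp]
    rw [h4 n]
  · set K : ℝ → ℝ := fun p => (1/2) * ((Real.sqrt (2-p) - 1)^2 + (Real.sqrt p - 1)^2) with hK
    have h5 : ∀ n : ℕ, (∫ x in (0:ℝ)..1, (Real.sqrt (deriv (gFun n) x) - 1)^2)
        = K ((2:ℝ)^(-(n:ℤ))) := by
      intro n
      have h := integral_single_eq n (fun u => (Real.sqrt u - 1)^2)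
      rw [h, slope0 n, slope1 n]
    have hKc : Continuous K := by
      rw [hK]; fun_prop
    have hlim := (hKc.tendsto 0).comp pn_tendsto
    have hlim' : Filter.Tendsto
        (fun n : ℕ => ∫ x in (0:ℝ)..1, (Real.sqrt (deriv (gFun n) x) - 1)^2)
        Filter.atTop (𝓝 (K 0)) := hlim.congr fun n => (h5 n).symm
    intro hc
    have huniq : (0:ℝ) = K 0 := tendsto_nhds_unique hc hlim'
    have hK0 : K 0 = (1/2) * ((Real.sqrt 2 - 1)^2 + 1) := by
      rw [hK]
      norm_num
    rw [hK0] at huniq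
    nlinarith [sq_nonneg (Real.sqrt 2 - 1)]
end

section
/- Let $(X, \mathfrak{S}, \mu)$ be a $\sigma$-finite measure space and $\mathcal{A} \subseteq L^\infty(X,\mathfrak{S},\mu)$ a von Neumann subalgebra (acting as multiplication operators on $L^2(X,\mathfrak{S},\mu)$). Then $\mathfrak{A} := \{E \in \mathfrak{S} : \chi_E \in \mathcal{A}\}$ is a $\sigma$-subalgebra of $\mathfrak{S}$ and $\mathcal{A} = L^\infty(X, \mathfrak{A}, \mu|_{\mathfrak{A}})$ (as subalgebras of $L^\infty(X,\mathfrak{S},\mu)$, up to $\mu$-null modification). -/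
open MeasureTheory Filter
open scoped ENNReal ComplexConjugate Topology

lemma my_wot_limit {X : Type*} [m : MeasurableSpace X] (μ : Measure X)
    (A : Set (X → ℂ))
    (hA_meas : ∀ f ∈ A, Measurable f)
    (hA_wot : ∀ f : X → ℂ, Measurable f → (∃ C : ℝ, ∀ x, ‖f x‖ ≤ C) →
      (∀ ε > (0 : ℝ), ∀ (n : ℕ) (φ ψ : Fin n → X → ℂ),
        (∀ i, MemLp (φ i) 2 μ) → (∀ i, MemLp (ψ i) 2 μ) →
        ∃ g ∈ A, ∀ i, ‖∫ x, conj (φ i x) * (f x - g x) * ψ i x ∂μ‖ < ε) →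
      f ∈ A)
    (F : ℕ → X → ℂ) (hF : ∀ n, F n ∈ A) (C : ℝ) (hFC : ∀ n x, ‖F n x‖ ≤ C)
    (f : X → ℂ) (hf : Measurable f) (C' : ℝ) (hC' : ∀ x, ‖f x‖ ≤ C')
    (hlim : ∀ᵐ x ∂μ, Tendsto (fun n => F n x) atTop (𝓝 (f x))) : f ∈ A := by
  apply hA_wot f hf ⟨C', hC'⟩
  intro ε hε n φ ψ hφ hψ
  have main : ∀ i : Fin n,
      Tendsto (fun N => ∫ x, conj (φ i x) * (f x - F N x) * ψ i x ∂μ) atTop (𝓝 0) := by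
    intro i
    have h0 : (0 : ℂ) = ∫ _x, (0 : ℂ) ∂μ := by simp
    rw [h0]
    have hbint : Integrable (fun x => ‖φ i x‖ * ‖ψ i x‖ * (C' + C)) μ := by
      have h1 : MemLp ((fun x => ‖φ i x‖) • fun x => ‖ψ i x‖) 1 μ :=
        MemLp.smul (hψ i).norm (hφ i).norm (hpqr := ⟨by simp [ENNReal.inv_two_add_inv_two]⟩)
      have h2 : Integrable (fun x => ‖φ i x‖ * ‖ψ i x‖) μ := by
        have := memLp_one_iff_integrable.mp h1
        simpa [Pi.smul_apply', smul_eq_mul, Pi.mul_def] using this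
      exact h2.mul_const _
    refine tendsto_integral_of_dominated_convergence
      (fun x => ‖φ i x‖ * ‖ψ i x‖ * (C' + C)) (fun N => ?_) hbint (fun N => ?_) ?_
    · have hφm := (hφ i).aestronglyMeasurable
      have hψm := (hψ i).aestronglyMeasurable
      have hconj : AEStronglyMeasurable (fun x => conj (φ i x)) μ :=
        Complex.continuous_conj.comp_aestronglyMeasurable hφm
      exact (hconj.mul ((hf.sub (hA_meas _ (hF N))).aestronglyMeasurable)).mul hψm
    · filter_upwards with x
      have h1 : ‖f x - F N x‖ ≤ C' + C :=
        (norm_sub_le _ _).trans (add_le_add (hC' x) (hFC N x))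
      calc ‖conj (φ i x) * (f x - F N x) * ψ i x‖
          = ‖φ i x‖ * ‖f x - F N x‖ * ‖ψ i x‖ := by
            simp [norm_mul]
        _ ≤ ‖φ i x‖ * (C' + C) * ‖ψ i x‖ := by
            gcongr
        _ = ‖φ i x‖ * ‖ψ i x‖ * (C' + C) := by ring
    · filter_upwards [hlim] with x hx
      have h1 : Tendsto (fun N => conj (φ i x) * (f x - F N x) * ψ i x) atTop
          (𝓝 (conj (φ i x) * (f x - f x) * ψ i x)) :=
        (((tendsto_const_nhds.sub hx).const_mul _).mul_const _)
      simpa using h1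
  have hev : ∀ᶠ N in atTop, ∀ i : Fin n,
      ‖∫ x, conj (φ i x) * (f x - F N x) * ψ i x ∂μ‖ < ε := by
    rw [eventually_all]
    intro i
    exact NormedAddCommGroup.tendsto_nhds_zero.mp (main i) ε hε
  obtain ⟨N, hN⟩ := hev.exists
  exact ⟨F N, hF N, hN⟩

lemma my_approx_bounded {X : Type*} [M : MeasurableSpace X] (h : X → ℂ)
    (hh : Measurable h) :
    ∃ F : ℕ → SimpleFunc X ℂ,
      (∀ n x, ‖F n x‖ ≤ ‖h x‖ + ‖h x‖) ∧
      ∀ x, Tendsto (fun n => F n x) atTop (𝓝 (h x)) := by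
  refine ⟨fun n => SimpleFunc.approxOn h hh Set.univ 0 (Set.mem_univ 0) n,
    fun n x => ?_, fun x => ?_⟩
  · exact SimpleFunc.norm_approxOn_zero_le hh (Set.mem_univ 0) x n
  · exact SimpleFunc.tendsto_approxOn hh (Set.mem_univ 0) (by simp)


lemma my_simpleFunc_mem {X : Type*} [M : MeasurableSpace X] (A : Set (X → ℂ))
    (hadd : ∀ f ∈ A, ∀ g ∈ A, f + g ∈ A)
    (hsmul : ∀ c : ℂ, ∀ f ∈ A, c • f ∈ A)
    (hind : ∀ s : Set X, MeasurableSet s → Set.indicator s (fun _ => (1 : ℂ)) ∈ A) :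
    ∀ F : SimpleFunc X ℂ, ⇑F ∈ A := by
  intro F
  induction F using SimpleFunc.induction with
  | const c hs =>
    rename_i s
    have : ⇑(SimpleFunc.piecewise s hs (SimpleFunc.const X c) (SimpleFunc.const X 0))
        = c • Set.indicator s (fun _ => (1 : ℂ)) := by
      funext x
      by_cases hx : x ∈ s <;>
        simp [SimpleFunc.coe_piecewise, Set.indicator_apply, hx, Set.piecewise]
    rw [this]
    exact hsmul c _ (hind s hs)
  | add _ hf hg =>
    rename_i f g _
    rw [SimpleFunc.coe_add]
    exact hadd _ hf _ hg

lemma my_poly_mem {X : Type*} (A : Set (X → ℂ))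
    (hA_one : (fun _ : X => (1 : ℂ)) ∈ A)
    (hA_add : ∀ f ∈ A, ∀ g ∈ A, f + g ∈ A)
    (hA_mul : ∀ f ∈ A, ∀ g ∈ A, f * g ∈ A)
    (hA_smul : ∀ (c : ℂ), ∀ f ∈ A, c • f ∈ A)
    (u : X → ℝ) (hu : (fun x => (u x : ℂ)) ∈ A) :
    ∀ p : Polynomial ℝ, (fun x => ((p.eval (u x) : ℝ) : ℂ)) ∈ A := by
  intro p
  induction p using Polynomial.induction_on with
  | C a =>
    have : (fun x : X => (((Polynomial.C a).eval (u x) : ℝ) : ℂ))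
        = (a : ℂ) • (fun _ : X => (1 : ℂ)) := by
      funext x; simp
    rw [this]
    exact hA_smul _ _ hA_one
  | add p q hp hq =>
    have : (fun x : X => (((p + q).eval (u x) : ℝ) : ℂ))
        = (fun x => ((p.eval (u x) : ℝ) : ℂ)) + fun x => ((q.eval (u x) : ℝ) : ℂ) := by
      funext x; push_cast [Polynomial.eval_add]; simp
    rw [this]
    exact hA_add _ hp _ hq
  | monomial n a ih =>
    have : (fun x : X => (((Polynomial.C a * Polynomial.X ^ (n + 1)).eval (u x) : ℝ) : ℂ))
        = (fun x => (((Polynomial.C a * Polynomial.X ^ n).eval (u x) : ℝ) : ℂ))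
          * fun x => ((u x : ℝ) : ℂ) := by
      funext x
      simp only [Pi.mul_apply]
      push_cast [Polynomial.eval_mul, Polynomial.eval_pow, Polynomial.eval_C, Polynomial.eval_X]
      ring
    rw [this]
    exact hA_mul _ ih _ hu

lemma my_cfc {X : Type*} [m : MeasurableSpace X] (μ : Measure X)
    (A : Set (X → ℂ))
    (hA_meas : ∀ f ∈ A, Measurable f)
    (hA_one : (fun _ : X => (1 : ℂ)) ∈ A)
    (hA_add : ∀ f ∈ A, ∀ g ∈ A, f + g ∈ A)
    (hA_mul : ∀ f ∈ A, ∀ g ∈ A, f * g ∈ A)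
    (hA_smul : ∀ (c : ℂ), ∀ f ∈ A, c • f ∈ A)
    (hA_wot : ∀ f : X → ℂ, Measurable f → (∃ C : ℝ, ∀ x, ‖f x‖ ≤ C) →
      (∀ ε > (0 : ℝ), ∀ (n : ℕ) (φ ψ : Fin n → X → ℂ),
        (∀ i, MemLp (φ i) 2 μ) → (∀ i, MemLp (ψ i) 2 μ) →
        ∃ g ∈ A, ∀ i, ‖∫ x, conj (φ i x) * (f x - g x) * ψ i x ∂μ‖ < ε) →
      f ∈ A)
    (u : X → ℝ) (hu_meas : Measurable u) (hu : (fun x => (u x : ℂ)) ∈ A)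
    (B : ℝ) (hB : ∀ x, |u x| ≤ B)
    (ψ : ℝ → ℝ) (hψ : Continuous ψ) :
    (fun x => ((ψ (u x) : ℝ) : ℂ)) ∈ A := by
  set B' : ℝ := max B 0 with hB'
  have humem : ∀ x, u x ∈ Set.Icc (-B') B' := by
    intro x
    have h : |u x| ≤ B' := (hB x).trans (le_max_left B 0)
    have := abs_le.mp h
    exact ⟨this.1, this.2⟩
  -- sup bound for ψ on the interval
  obtain ⟨D, hD⟩ := isCompact_Icc.exists_bound_of_continuousOn
    (hψ.continuousOn : ContinuousOn ψ (Set.Icc (-B') B'))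
  -- choose approximating polynomials
  have hex : ∀ k : ℕ, ∃ p : Polynomial ℝ,
      ∀ t ∈ Set.Icc (-B') B', |p.eval t - ψ t| < 1 / (k + 1) := by
    intro k
    exact exists_polynomial_near_of_continuousOn (-B') B' ψ hψ.continuousOn _
      (by positivity)
  choose p hp using hex
  refine my_wot_limit μ A hA_meas hA_wot
    (fun k x => (((p k).eval (u x) : ℝ) : ℂ))
    (fun k => my_poly_mem A hA_one hA_add hA_mul hA_smul u hu (p k))
    (D + 1) ?_ _ ?_ D ?_ ?_
  · intro k x
    have h1 := hp k (u x) (humem x)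
    have h2 := hD (u x) (humem x)
    have : |(p k).eval (u x)| ≤ |ψ (u x)| + 1 := by
      have := abs_sub_abs_le_abs_sub ((p k).eval (u x)) (ψ (u x))
      have hk : (1 : ℝ) / (k + 1) ≤ 1 := by
        rw [div_le_one (by positivity)]; linarith [Nat.cast_nonneg (α := ℝ) k]
      nlinarith [abs_nonneg (ψ (u x))]
    rw [Complex.norm_real]
    calc |(p k).eval (u x)| ≤ |ψ (u x)| + 1 := this
      _ ≤ D + 1 := by have := hD (u x) (humem x); simp only [Real.norm_eq_abs] at this; linarith
  · exact Complex.measurable_ofReal.comp (hψ.measurable.comp hu_meas)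
  · intro x
    rw [Complex.norm_real, Real.norm_eq_abs]
    have := hD (u x) (humem x); simp only [Real.norm_eq_abs] at this; linarith
  · filter_upwards with x
    rw [tendsto_iff_norm_sub_tendsto_zero]
    apply squeeze_zero (fun k => norm_nonneg _) (fun k => ?_)
      tendsto_one_div_add_atTop_nhds_zero_nat
    have h1 := hp k (u x) (humem x)
    have : ((((p k).eval (u x) : ℝ)) : ℂ) - ((ψ (u x) : ℝ) : ℂ)
        = (((p k).eval (u x) - ψ (u x) : ℝ) : ℂ) := by push_cast; ring
    rw [this, Complex.norm_real, Real.norm_eq_abs]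
    exact h1.le


lemma my_levelset {X : Type*} [m : MeasurableSpace X] (μ : Measure X)
    (A : Set (X → ℂ))
    (hA_meas : ∀ f ∈ A, Measurable f)
    (hA_one : (fun _ : X => (1 : ℂ)) ∈ A)
    (hA_add : ∀ f ∈ A, ∀ g ∈ A, f + g ∈ A)
    (hA_mul : ∀ f ∈ A, ∀ g ∈ A, f * g ∈ A)
    (hA_smul : ∀ (c : ℂ), ∀ f ∈ A, c • f ∈ A)
    (hA_wot : ∀ f : X → ℂ, Measurable f → (∃ C : ℝ, ∀ x, ‖f x‖ ≤ C) →
      (∀ ε > (0 : ℝ), ∀ (n : ℕ) (φ ψ : Fin n → X → ℂ),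
        (∀ i, MemLp (φ i) 2 μ) → (∀ i, MemLp (ψ i) 2 μ) →
        ∃ g ∈ A, ∀ i, ‖∫ x, conj (φ i x) * (f x - g x) * ψ i x ∂μ‖ < ε) →
      f ∈ A)
    (u : X → ℝ) (hu_meas : Measurable u) (hu : (fun x => (u x : ℂ)) ∈ A)
    (B : ℝ) (hB : ∀ x, |u x| ≤ B) (c : ℝ) :
    Set.indicator {x | c < u x} (fun _ => (1 : ℂ)) ∈ A := by
  set ψ : ℕ → ℝ → ℝ := fun n t => min 1 (max 0 ((n + 1) * (t - c))) with hψdef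
  have hψcont : ∀ n, Continuous (ψ n) := by
    intro n
    apply continuous_const.min
    exact continuous_const.max (by fun_prop)
  have hψ01 : ∀ n t, 0 ≤ ψ n t ∧ ψ n t ≤ 1 := by
    intro n t
    constructor
    · exact le_min zero_le_one (le_max_left _ _)
    · exact min_le_left _ _
  refine my_wot_limit μ A hA_meas hA_wot
    (fun n x => ((ψ n (u x) : ℝ) : ℂ))
    (fun n => my_cfc μ A hA_meas hA_one hA_add hA_mul hA_smul hA_wot u hu_meas hu B hB
      (ψ n) (hψcont n))
    1 ?_ _ ?_ 1 ?_ ?_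
  · intro n x
    rw [Complex.norm_real, Real.norm_eq_abs, abs_le]
    have := hψ01 n (u x)
    constructor <;> linarith
  · exact Measurable.indicator measurable_const (measurableSet_lt measurable_const hu_meas)
  · intro x
    by_cases hx : x ∈ {x | c < u x} <;> simp [Set.indicator_apply, hx]
  · filter_upwards with x
    by_cases hx : c < u x
    · have hlt : 0 < u x - c := by linarith
      obtain ⟨N, hN⟩ := exists_nat_ge (1 / (u x - c))
      apply tendsto_atTop_of_eventually_const (i₀ := N)
      intro n hn
      have h1 : (1 : ℝ) ≤ (n + 1) * (u x - c) := by
        have h2 : (1 : ℝ) / (u x - c) ≤ (n : ℝ) + 1 := by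
          have : (N : ℝ) ≤ (n : ℝ) := Nat.cast_le.mpr hn
          linarith
        calc (1 : ℝ) = (1 / (u x - c)) * (u x - c) := by field_simp
          _ ≤ ((n : ℝ) + 1) * (u x - c) := by
              apply mul_le_mul_of_nonneg_right h2 hlt.le
      have : ψ n (u x) = 1 := by
        rw [hψdef]
        simp only []
        rw [max_eq_right (by linarith), min_eq_left h1]
      rw [this]
      simp [Set.indicator_apply, hx]
    · have : ∀ n, ψ n (u x) = 0 := by
        intro n
        rw [hψdef]
        simp only []
        rw [max_eq_left, min_eq_right zero_le_one]
        have : u x - c ≤ 0 := by linarith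
        nlinarith [Nat.cast_nonneg (α := ℝ) n]
      simp only [this]
      have hx' : x ∉ {x | c < u x} := hx
      rw [Set.indicator_of_notMem hx']
      simpa using tendsto_const_nhds

/-- **Theorem (the `L^∞`-Subalgebra Theorem).**
Let `(X, 𝔖, μ)` be a σ-finite measure space and let `𝒜 ⊆ L^∞(X, 𝔖, μ)` be a von
Neumann subalgebra, i.e. a *-subalgebra containing `1`, stable under `μ`-a.e.
modification, and closed in the weak operator topology of the multiplication
action on `L²(X, 𝔖, μ)`.  Then
`𝔄 := {E ∈ 𝔖 : χ_E ∈ 𝒜}` is a σ-subalgebra of `𝔖`, and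
`𝒜 = L^∞(X, 𝔄, μ|_𝔄)`: a bounded `𝔖`-measurable function lies in `𝒜` if and
only if it agrees `μ`-a.e. with an `𝔄`-measurable function. -/
theorem Linfty_subalgebra_theorem
    {X : Type*} [m : MeasurableSpace X] (μ : Measure X) [SigmaFinite μ]
    (A : Set (X → ℂ))
    -- `𝒜` consists of (representatives of) elements of `L^∞`
    (hA_meas : ∀ f ∈ A, Measurable f)
    (hA_bdd : ∀ f ∈ A, ∃ C : ℝ, ∀ x, ‖f x‖ ≤ C)
    -- `𝒜` is a unital *-subalgebra
    (hA_one : (fun _ : X => (1 : ℂ)) ∈ A)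
    (hA_add : ∀ f ∈ A, ∀ g ∈ A, f + g ∈ A)
    (hA_mul : ∀ f ∈ A, ∀ g ∈ A, f * g ∈ A)
    (hA_smul : ∀ (c : ℂ), ∀ f ∈ A, c • f ∈ A)
    (hA_star : ∀ f ∈ A, (fun x => conj (f x)) ∈ A)
    -- `𝒜` is stable under modification on `μ`-null sets
    (hA_ae : ∀ f ∈ A, ∀ g : X → ℂ, Measurable g → (∃ C : ℝ, ∀ x, ‖g x‖ ≤ C) →
      f =ᵐ[μ] g → g ∈ A)
    -- `𝒜` is closed in the weak operator topology of `B(L²(X,𝔖,μ))`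
    (hA_wot : ∀ f : X → ℂ, Measurable f → (∃ C : ℝ, ∀ x, ‖f x‖ ≤ C) →
      (∀ ε > (0 : ℝ), ∀ (n : ℕ) (φ ψ : Fin n → X → ℂ),
        (∀ i, MemLp (φ i) 2 μ) → (∀ i, MemLp (ψ i) 2 μ) →
        ∃ g ∈ A, ∀ i, ‖∫ x, conj (φ i x) * (f x - g x) * ψ i x ∂μ‖ < ε) →
      f ∈ A) :
    -- conclusion: `𝔄` is a σ-subalgebra of `𝔖` ...
    (Set.univ ∈ {E : Set X | MeasurableSet E ∧ Set.indicator E (fun _ => (1 : ℂ)) ∈ A}) ∧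
    (∀ E ∈ {E : Set X | MeasurableSet E ∧ Set.indicator E (fun _ => (1 : ℂ)) ∈ A},
      Eᶜ ∈ {E : Set X | MeasurableSet E ∧ Set.indicator E (fun _ => (1 : ℂ)) ∈ A}) ∧
    (∀ s : ℕ → Set X,
      (∀ k, s k ∈ {E : Set X | MeasurableSet E ∧ Set.indicator E (fun _ => (1 : ℂ)) ∈ A}) →
      (⋃ k, s k) ∈ {E : Set X | MeasurableSet E ∧ Set.indicator E (fun _ => (1 : ℂ)) ∈ A}) ∧
    -- ... and `𝒜 = L^∞(X, 𝔄, μ|_𝔄)` up to `μ`-null modification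
    (∀ f : X → ℂ, Measurable f → (∃ C : ℝ, ∀ x, ‖f x‖ ≤ C) →
      (f ∈ A ↔ ∃ g : X → ℂ,
        Measurable[MeasurableSpace.generateFrom
          {E : Set X | MeasurableSet E ∧ Set.indicator E (fun _ => (1 : ℂ)) ∈ A}] g ∧
        f =ᵐ[μ] g)) := by
  classical
  set 𝔄 : Set (Set X) :=
    {E : Set X | MeasurableSet E ∧ Set.indicator E (fun _ => (1 : ℂ)) ∈ A} with h𝔄def
  -- closure under subtraction
  have hA_sub : ∀ f ∈ A, ∀ g ∈ A, f - g ∈ A := by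
    intro f hf g hg
    have : f - g = f + (-1 : ℂ) • g := by funext x; simp [sub_eq_add_neg]
    rw [this]; exact hA_add f hf _ (hA_smul (-1) g hg)
  -- 1. univ
  have h1 : Set.univ ∈ 𝔄 := by
    refine ⟨MeasurableSet.univ, ?_⟩
    rw [Set.indicator_univ]; exact hA_one
  -- 2. complements
  have h2 : ∀ E ∈ 𝔄, Eᶜ ∈ 𝔄 := by
    intro E hE
    refine ⟨hE.1.compl, ?_⟩
    have : Set.indicator Eᶜ (fun _ => (1 : ℂ))
        = (fun _ : X => (1 : ℂ)) - Set.indicator E (fun _ => (1 : ℂ)) := by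
      funext x; by_cases hx : x ∈ E <;> simp [Set.indicator_apply, hx]
    rw [this]; exact hA_sub _ hA_one _ hE.2
  -- finite unions
  have hU2 : ∀ E ∈ 𝔄, ∀ F ∈ 𝔄, E ∪ F ∈ 𝔄 := by
    intro E hE F hF
    refine ⟨hE.1.union hF.1, ?_⟩
    have : Set.indicator (E ∪ F) (fun _ => (1 : ℂ))
        = Set.indicator E (fun _ => (1 : ℂ)) + Set.indicator F (fun _ => (1 : ℂ))
          - Set.indicator E (fun _ => (1 : ℂ)) * Set.indicator F (fun _ => (1 : ℂ)) := by
      funext x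
      by_cases hxE : x ∈ E <;> by_cases hxF : x ∈ F <;>
        simp [Set.indicator_apply, hxE, hxF]
    rw [this]
    exact hA_sub _ (hA_add _ hE.2 _ hF.2) _ (hA_mul _ hE.2 _ hF.2)
  -- 3. countable unions
  have h3 : ∀ s : ℕ → Set X, (∀ k, s k ∈ 𝔄) → (⋃ k, s k) ∈ 𝔄 := by
    intro s hs
    set U : ℕ → Set X := fun n => ⋃ k ∈ Finset.range (n + 1), s k with hUdef
    have hUmem : ∀ n, U n ∈ 𝔄 := by
      intro n
      induction n with
      | zero => simpa [hUdef] using hs 0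
      | succ n ih =>
        have : U (n + 1) = s (n + 1) ∪ U n := by
          rw [hUdef]
          simp only []
          rw [Finset.range_add_one, Finset.set_biUnion_insert]
        rw [this]
        exact hU2 _ (hs (n + 1)) _ ih
    have hUsub : ∀ n, U n ⊆ ⋃ k, s k := by
      intro n x hx
      simp only [hUdef, Set.mem_iUnion, Finset.mem_range] at hx
      obtain ⟨k, _, hk⟩ := hx
      exact Set.mem_iUnion.mpr ⟨k, hk⟩
    have hmeasU : MeasurableSet (⋃ k, s k) := MeasurableSet.iUnion fun k => (hs k).1
    refine ⟨hmeasU, ?_⟩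
    refine my_wot_limit μ A hA_meas hA_wot
      (fun n => Set.indicator (U n) (fun _ => (1 : ℂ)))
      (fun n => (hUmem n).2) 1 ?_ _ (Measurable.indicator measurable_const hmeasU) 1 ?_ ?_
    · intro n x
      by_cases hx : x ∈ U n <;> simp [Set.indicator_apply, hx]
    · intro x
      by_cases hx : x ∈ ⋃ k, s k <;> simp [Set.indicator_apply, hx]
    · filter_upwards with x
      by_cases hx : x ∈ ⋃ k, s k
      · obtain ⟨K, hK⟩ := Set.mem_iUnion.mp hx
        apply tendsto_atTop_of_eventually_const (i₀ := K)
        intro n hn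
        have hxU : x ∈ U n := by
          simp only [hUdef, Set.mem_iUnion, Finset.mem_range]
          exact ⟨K, Nat.lt_succ_of_le hn, hK⟩
        rw [Set.indicator_of_mem hxU, Set.indicator_of_mem hx]
      · have : ∀ n, x ∉ U n := fun n hn => hx (hUsub n hn)
        apply tendsto_atTop_of_eventually_const (i₀ := 0)
        intro n _
        rw [Set.indicator_of_notMem (this n), Set.indicator_of_notMem hx]
  refine ⟨h1, h2, h3, ?_⟩
  -- 4. the L∞ identification
  intro f hf_meas hf_bdd
  obtain ⟨C, hC⟩ := hf_bdd
  constructor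
  · -- forward: f ∈ A → f itself is 𝔄-measurable
    intro hfA
    have hre_mem : (fun x => (((f x).re : ℝ) : ℂ)) ∈ A := by
      have : (fun x => (((f x).re : ℝ) : ℂ))
          = (1 / 2 : ℂ) • (f + fun x => conj (f x)) := by
        funext x
        simp only [Pi.smul_apply, Pi.add_apply, smul_eq_mul]
        rw [Complex.add_conj]; push_cast; ring
      rw [this]
      exact hA_smul _ _ (hA_add f hfA _ (hA_star f hfA))
    have him_mem : (fun x => (((f x).im : ℝ) : ℂ)) ∈ A := by
      have : (fun x => (((f x).im : ℝ) : ℂ))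
          = (1 / (2 * Complex.I) : ℂ) • (f - fun x => conj (f x)) := by
        funext x
        simp only [Pi.smul_apply, Pi.sub_apply, smul_eq_mul]
        rw [Complex.sub_conj]
        field_simp
        push_cast; ring
      rw [this]
      exact hA_smul _ _ (hA_sub f hfA _ (hA_star f hfA))
    have hre_bd : ∀ x, |(f x).re| ≤ C := fun x =>
      (Complex.abs_re_le_norm (f x)).trans (by exact hC x)
    have him_bd : ∀ x, |(f x).im| ≤ C := fun x =>
      (Complex.abs_im_le_norm (f x)).trans (by exact hC x)
    have hre_measurable : Measurable fun x => (f x).re := Complex.measurable_re.comp hf_meas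
    have him_measurable : Measurable fun x => (f x).im := Complex.measurable_im.comp hf_meas
    have hEre : ∀ c : ℝ, {x | c < (f x).re} ∈ 𝔄 := fun c =>
      ⟨measurableSet_lt measurable_const hre_measurable,
        my_levelset μ A hA_meas hA_one hA_add hA_mul hA_smul hA_wot
          (fun x => (f x).re) hre_measurable hre_mem C hre_bd c⟩
    have hEim : ∀ c : ℝ, {x | c < (f x).im} ∈ 𝔄 := fun c =>
      ⟨measurableSet_lt measurable_const him_measurable,
        my_levelset μ A hA_meas hA_one hA_add hA_mul hA_smul hA_wot
          (fun x => (f x).im) him_measurable him_mem C him_bd c⟩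
    have hre' : Measurable[MeasurableSpace.generateFrom 𝔄] fun x => (f x).re := by
      apply measurable_of_Ioi
      intro c
      have : (fun x => (f x).re) ⁻¹' Set.Ioi c = {x | c < (f x).re} := rfl
      rw [this]
      exact MeasurableSpace.measurableSet_generateFrom (hEre c)
    have him' : Measurable[MeasurableSpace.generateFrom 𝔄] fun x => (f x).im := by
      apply measurable_of_Ioi
      intro c
      have : (fun x => (f x).im) ⁻¹' Set.Ioi c = {x | c < (f x).im} := rfl
      rw [this]
      exact MeasurableSpace.measurableSet_generateFrom (hEim c)
    refine ⟨f, ?_, Filter.EventuallyEq.rfl⟩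
    have hfeq : f = fun x => (((f x).re : ℝ) : ℂ) + (((f x).im : ℝ) : ℂ) * Complex.I := by
      funext x; exact (Complex.re_add_im (f x)).symm
    rw [hfeq]
    exact (Complex.measurable_ofReal.comp hre').add
      ((Complex.measurable_ofReal.comp him').mul_const _)
  · -- reverse
    rintro ⟨g, hg, hfg⟩
    have hempty : (∅ : Set X) ∈ 𝔄 := by
      have := h2 Set.univ h1
      rwa [Set.compl_univ] at this
    set M0 : MeasurableSpace X :=
      { MeasurableSet' := fun E => E ∈ 𝔄
        measurableSet_empty := hempty
        measurableSet_compl := fun s hs => h2 s hs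
        measurableSet_iUnion := fun s hs => h3 s hs } with hM0def
    have hgen : MeasurableSpace.generateFrom 𝔄 ≤ M0 :=
      MeasurableSpace.generateFrom_le fun t ht => ht
    have hM0le : M0 ≤ m := fun s hs => hs.1
    have hgM0 : Measurable[M0] g := hg.mono hgen le_rfl
    set S : Set X := g ⁻¹' Metric.closedBall 0 C with hSdef
    have hS : MeasurableSet[M0] S := hgM0 measurableSet_closedBall
    have hSmem : ∀ x, x ∈ S ↔ ‖g x‖ ≤ C := by
      intro x; rw [hSdef]; exact mem_closedBall_zero_iff
    set h : X → ℂ := S.indicator g with hhdef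
    have hM0h : Measurable[M0] h := hgM0.indicator hS
    have hhb : ∀ x, ‖h x‖ ≤ max C 0 := by
      intro x
      by_cases hx : x ∈ S
      · rw [hhdef, Set.indicator_of_mem hx]
        exact ((hSmem x).mp hx).trans (le_max_left _ _)
      · rw [hhdef, Set.indicator_of_notMem hx]
        simp
    have hsimp : ∀ F : @SimpleFunc X M0 ℂ, ⇑F ∈ A :=
      my_simpleFunc_mem (M := M0) A hA_add hA_smul (fun s hs => hs.2)
    obtain ⟨F, hFb, hFt⟩ := my_approx_bounded (M := M0) h hM0h
    set G : ℕ → X → ℂ := fun n => @DFunLike.coe _ _ _ (@SimpleFunc.instFunLike X ℂ M0) (F n)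
      with hGdef
    have hGA : ∀ n, G n ∈ A := fun n => hsimp (F n)
    have hGb : ∀ n x, ‖G n x‖ ≤ max C 0 + max C 0 :=
      fun n x => (hFb n x).trans (add_le_add (hhb x) (hhb x))
    have hGt : ∀ x, Tendsto (fun n => G n x) atTop (𝓝 (h x)) := hFt
    have hhm : @Measurable X ℂ m Complex.measurableSpace h :=
      Measurable.mono hM0h hM0le le_rfl
    have hhA : h ∈ A :=
      @my_wot_limit X m μ A hA_meas hA_wot G hGA (max C 0 + max C 0) hGb h hhm (max C 0) hhb
        (Eventually.of_forall hGt)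
    have hhf : h =ᵐ[μ] f := by
      filter_upwards [hfg] with x hx
      have hxS : x ∈ S := by
        rw [hSmem]
        rw [← hx]; exact hC x
      rw [hhdef, Set.indicator_of_mem hxS, ← hx]
    exact hA_ae h hhA f hf_meas ⟨C, hC⟩ hhf
end
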